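/- Let k be a field and n ≥ 2. Consider the polynomial ring k[z_{uv}^{(m)} : 1 ≤ u,v ≤ n, m ∈ ℕ] and the n×n matrix z(s) of formal power series z_{uv}(s) = Σ_{m≥0} z_{uv}^{(m)} s^m. Let I be the ideal generated by all s-coefficients of det(z(s)) − 1. Then I has trivial intersection with the polynomial subalgebra generated by all variables z_{uv}^{(m)} with (u,v) ≠ (n,n). -/

import Mathlib

open Finset
open scoped Classical

namespace Paper

/-- The value (as a natural number) of the `p`-th smallest element (0-based) of `I`;
junk value `0` out of range. -/
def elemV {n : ℕ} (I : Finset (Fin n)) (p : ℕ) : ℕ :=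
  ((I.sort (· ≤ ·)).map Fin.val).getD p 0

/-- The `p`-th smallest element (0-based) of `I`; junk value out of range. -/
def elemF {n : ℕ} (hn : 0 < n) (I : Finset (Fin n)) (p : ℕ) : Fin n :=
  (I.sort (· ≤ ·)).getD p ⟨0, hn⟩

/-- The minor of `z` on the rows of `I` (in increasing order) and the first `I.card` columns. -/
noncomputable def fminor {R : Type*} [CommRing R] {n : ℕ} (z : Matrix (Fin n) (Fin n) R)
    (I : Finset (Fin n)) : R :=
  if h : I.card ≤ n then
    Matrix.det (Matrix.of fun a b : Fin I.card => z (I.orderEmbOfFin rfl a) (Fin.castLE h b))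
  else 0

/-- The minor of `z` whose rows are the elements of the multiset `L` (sorted increasingly,
with multiplicity) and whose columns are the first `L.card` columns.  If `L` has a repeated
element the corresponding determinant has two equal rows, hence it is `0`. -/
noncomputable def mminor {R : Type*} [CommRing R] {N : ℕ} (z : Matrix (Fin N) (Fin N) R)
    (L : Multiset (Fin N)) : R :=
  if h : (L.sort (· ≤ ·)).length ≤ N then
    Matrix.det (Matrix.of fun a b : Fin (L.sort (· ≤ ·)).length =>
      z ((L.sort (· ≤ ·)).get a) (Fin.castLE h b))
  else 0

/-- `I ≤ J` iff `|I| ≥ |J|` and `i_s ≤ j_s` for all `s ≤ |J|` (0-based positions). -/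
def finsetLE {n : ℕ} (I J : Finset (Fin n)) : Prop :=
  J.card ≤ I.card ∧ ∀ p < J.card, elemV I p ≤ elemV J p

/-- `J ≺ I` iff `|J| < |I|`, or `|J| = |I|` and the largest element of the symmetric
difference `I Δ J` belongs to `I`. -/
def prec {n : ℕ} (J I : Finset (Fin n)) : Prop :=
  J.card < I.card ∨ (J.card = I.card ∧
    ∃ x ∈ (I \ J) ∪ (J \ I), x ∈ I ∧ ∀ y ∈ (I \ J) ∪ (J \ I), y ≤ x)

/-- `L` is a strictly decreasing list of (0-based) positions `< |J|` at which the
coordinatewise comparison of `I` and `J` alternates strictly, starting with `i > j`. -/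
def altChain {n : ℕ} (I J : Finset (Fin n)) (L : List ℕ) : Prop :=
  L.Chain' (· > ·) ∧ (∀ p ∈ L, p < J.card) ∧
    ∀ t < L.length, if Even t then elemV J (L.getD t 0) < elemV I (L.getD t 0)
      else elemV I (L.getD t 0) < elemV J (L.getD t 0)

/-- `k(I,J)`: `0` for comparable pairs; otherwise the number of switch positions in the
coordinatewise comparison of `I` and `J` (the greedy top-down alternating count, equivalently
the longest strictly alternating subsequence starting with `i > j`). -/
noncomputable def kNum {n : ℕ} (I J : Finset (Fin n)) : ℕ :=
  if finsetLE I J ∨ finsetLE J I then 0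
  else
    letI := Classical.decPred fun m => ∃ L : List ℕ, L.length = m ∧ altChain I J L
    Nat.findGreatest (fun m => ∃ L : List ℕ, L.length = m ∧ altChain I J L) J.card

/-- The symmetrised `k(I,J) = k(J,I)`, computed in the orientation where the `≺`-larger
set plays the role of `I`. -/
noncomputable def kOf {n : ℕ} (I J : Finset (Fin n)) : ℕ :=
  if prec J I then kNum I J else kNum J I

/-- The sign of the permutation rearranging the increasing enumeration of `A` into the
concatenation (elements of `B` increasing, then elements of `A \ B` increasing). -/
def signAsc {n : ℕ} (A B : Finset (Fin n)) : ℤ :=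
  (-1) ^ (∑ b ∈ B, ((A \ B).filter (· < b)).card)

/-- The sign of the permutation rearranging the decreasing enumeration of `S` into the
concatenation (elements of `A` decreasing, then elements of `S \ A` decreasing). -/
def signDesc {n : ℕ} (S A : Finset (Fin n)) : ℤ :=
  (-1) ^ (∑ a ∈ A, ((S \ A).filter (a < ·)).card)

/-- The row (index) `l` of `{1,…,n}` inside `{1,1̄,…,n,n̄}` (0-based: `l ↦ 2l`). -/
def emb0 {n : ℕ} (l : Fin n) : Fin (2 * n) := ⟨2 * l.1, by have := l.2; omega⟩

/-- The row (index) `l̄` inside `{1,1̄,…,n,n̄}` (0-based: `l̄ ↦ 2l+1`). -/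
def emb1 {n : ℕ} (l : Fin n) : Fin (2 * n) := ⟨2 * l.1 + 1, by have := l.2; omega⟩

/-- `ε_{uv}`: `1` if `v = ū`, `-1` if `u = v̄`, `0` otherwise. -/
def eps {R : Type*} [CommRing R] {n : ℕ} (u v : Fin (2 * n)) : R :=
  if u.1 % 2 = 0 ∧ v.1 = u.1 + 1 then 1
  else if v.1 % 2 = 0 ∧ u.1 = v.1 + 1 then -1 else 0

/-- `J` is forbidden if `j_b = ā` for some `1 ≤ a < b ≤ |J|` (1-based positions; `ā` has
0-based value `2a-1` in the ordering `1 < 1̄ < 2 < 2̄ < …`). -/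
def Forbidden {N : ℕ} (J : Finset (Fin N)) : Prop :=
  ∃ a b : ℕ, 1 ≤ a ∧ a < b ∧ b ≤ J.card ∧ elemV J (b - 1) = 2 * a - 1

end Paper

namespace Paper

/-- The generic `n × n` matrix of power series: the arc-space coordinates of `GL_n`. -/
noncomputable def genZ (k : Type*) [CommSemiring k] (n : ℕ) :
    Matrix (Fin n) (Fin n) (PowerSeries (MvPolynomial (Fin n × Fin n × ℕ) k)) :=
  Matrix.of fun u v => PowerSeries.mk fun m => MvPolynomial.X (u, v, m)

/-- the defining ideal of the arc space of `SL_n` (generated by all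
`s`-coefficients of `det z(s) - 1`) intersects trivially the polynomial subalgebra generated
by all variables `z_{uv}^{(m)}` with `(u,v) ≠ (n,n)`. -/
theorem current_ideal_det_inter_subalgebra_eq_bot (k : Type*) [Field k] (n : ℕ) (hn : 2 ≤ n)
    (p : MvPolynomial (Fin n × Fin n × ℕ) k)
    (hp : p ∈ Ideal.span {q | ∃ m : ℕ,
      q = PowerSeries.coeff (R := MvPolynomial (Fin n × Fin n × ℕ) k) m ((genZ k n).det - 1)})
    (hp' : p ∈ Algebra.adjoin k {q : MvPolynomial (Fin n × Fin n × ℕ) k |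
      ∃ (u v : Fin n) (m : ℕ),
        (u, v) ≠ ((⟨n - 1, by omega⟩ : Fin n), (⟨n - 1, by omega⟩ : Fin n)) ∧
        q = MvPolynomial.X (u, v, m)}) :
    p = 0 := by
  classical
  set last : Fin n := ⟨n - 1, by omega⟩ with hlast
  -- matrix with (last,last) entry zeroed out
  set Z0 : Matrix (Fin n) (Fin n) (PowerSeries (MvPolynomial (Fin n × Fin n × ℕ) k)) :=
    Matrix.of (fun u v => if u = last ∧ v = last then 0 else (genZ k n) u v) with hZ0
  set a : PowerSeries (MvPolynomial (Fin n × Fin n × ℕ) k) := (Z0.updateRow last (Pi.single last 1)).det with ha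
  set b : PowerSeries (MvPolynomial (Fin n × Fin n × ℕ) k) := Z0.det with hb
  -- row expansion identity
  have hdet : (genZ k n).det = b + (genZ k n) last last * a := by
    have h1 : genZ k n = Z0.updateRow last
        (Z0 last + (genZ k n) last last • (Pi.single last 1 : Fin n → PowerSeries (MvPolynomial (Fin n × Fin n × ℕ) k))) := by
      ext u v
      rcases eq_or_ne u last with rfl | hu
      · simp only [Matrix.updateRow_self, Pi.add_apply, Pi.smul_apply, smul_eq_mul]
        rcases eq_or_ne v last with rfl | hv
        · simp [hZ0]
        · simp [hZ0, hv, Pi.single_apply]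
      · simp [Matrix.updateRow_ne hu, hZ0, hu]
    calc (genZ k n).det
        = (Z0.updateRow last (Z0 last + (genZ k n) last last • (Pi.single last 1 : Fin n → PowerSeries (MvPolynomial (Fin n × Fin n × ℕ) k)))).det := by
          rw [← h1]
      _ = (Z0.updateRow last (Z0 last)).det
            + (genZ k n) last last * (Z0.updateRow last (Pi.single last 1)).det := by
          rw [Matrix.det_updateRow_add, Matrix.det_updateRow_smul]
      _ = b + (genZ k n) last last * a := by rw [Matrix.updateRow_eq_self]
  -- the constant coefficient of a is nonzero
  set δ : MvPolynomial (Fin n × Fin n × ℕ) k := PowerSeries.constantCoeff (R := MvPolynomial (Fin n × Fin n × ℕ) k) a with hδdef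
  have hδ : δ ≠ 0 := by
    intro h0
    have h1 : (MvPolynomial.eval fun i : Fin n × Fin n × ℕ =>
        if i.1 = i.2.1 then (1 : k) else 0) δ = 1 := by
      have hmat : ((Z0.updateRow last (Pi.single last 1)).map
          ((MvPolynomial.eval fun i : Fin n × Fin n × ℕ =>
            if i.1 = i.2.1 then (1 : k) else 0) ∘ (PowerSeries.constantCoeff (R := MvPolynomial (Fin n × Fin n × ℕ) k))))
          = (1 : Matrix (Fin n) (Fin n) k) := by
        ext u v
        rcases eq_or_ne u last with rfl | hu
        · simp [Matrix.map_apply, Pi.single_apply, Matrix.one_apply, apply_ite, eq_comm]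
        · simp only [Matrix.map_apply, Matrix.updateRow_ne hu, hZ0, Matrix.of_apply,
            Function.comp_apply]
          rw [if_neg (by tauto)]
          simp [genZ, PowerSeries.constantCoeff_mk, Matrix.one_apply]
      rw [hδdef, ha, RingHom.map_det, RingHom.mapMatrix_apply, RingHom.map_det,
        RingHom.mapMatrix_apply, Matrix.map_map, hmat, Matrix.det_one]
    rw [h0, map_zero] at h1
    exact zero_ne_one h1
  -- localize away from δ
  set T := Localization.Away δ with hT
  set g : MvPolynomial (Fin n × Fin n × ℕ) k →+* T :=
    algebraMap (MvPolynomial (Fin n × Fin n × ℕ) k) T with hg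
  have injg : Function.Injective g :=
    IsLocalization.injective T (powers_le_nonZeroDivisors_of_noZeroDivisors hδ)
  have hAunit : IsUnit (PowerSeries.map g a) := by
    rw [PowerSeries.isUnit_iff_constantCoeff, ← PowerSeries.coeff_zero_eq_constantCoeff_apply,
      PowerSeries.coeff_map, PowerSeries.coeff_zero_eq_constantCoeff_apply]
    exact IsLocalization.Away.algebraMap_isUnit δ
  obtain ⟨U, hU⟩ := hAunit
  set B : PowerSeries T := PowerSeries.map g b with hB
  set w : PowerSeries T := (1 - B) * ↑U⁻¹ with hw
  set φ : MvPolynomial (Fin n × Fin n × ℕ) k →+* T := MvPolynomial.eval₂Hom (g.comp MvPolynomial.C)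
    (fun i => if i.1 = last ∧ i.2.1 = last then PowerSeries.coeff (R := T) i.2.2 w
      else g (MvPolynomial.X i)) with hφ
  have hφX : ∀ i : Fin n × Fin n × ℕ, φ (MvPolynomial.X i) =
      if i.1 = last ∧ i.2.1 = last then PowerSeries.coeff (R := T) i.2.2 w
      else g (MvPolynomial.X i) := fun i => MvPolynomial.eval₂Hom_X' _ _ i
  -- entrywise action of φ
  have hent : ∀ u v, PowerSeries.map φ ((genZ k n) u v) =
      if u = last ∧ v = last then w else PowerSeries.map g ((genZ k n) u v) := by
    intro u v
    by_cases h : u = last ∧ v = last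
    · rw [if_pos h]
      ext m
      rw [PowerSeries.coeff_map]
      simp only [genZ, Matrix.of_apply, PowerSeries.coeff_mk, hφX]
      rw [if_pos ⟨h.1, h.2⟩]
    · rw [if_neg h]
      ext m
      rw [PowerSeries.coeff_map, PowerSeries.coeff_map]
      simp only [genZ, Matrix.of_apply, PowerSeries.coeff_mk, hφX]
      rw [if_neg (by tauto)]
  have hZ0map : ∀ u v, PowerSeries.map φ (Z0 u v) = PowerSeries.map g (Z0 u v) := by
    intro u v
    by_cases h : u = last ∧ v = last
    · simp only [hZ0, Matrix.of_apply, if_pos h, map_zero]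
    · simp only [hZ0, Matrix.of_apply, if_neg h]
      rw [hent, if_neg h]
  have hmapa : PowerSeries.map φ a = PowerSeries.map g a := by
    rw [ha, RingHom.map_det, RingHom.map_det, RingHom.mapMatrix_apply, RingHom.mapMatrix_apply]
    refine congrArg Matrix.det (Matrix.ext fun u v => ?_)
    simp only [Matrix.map_apply]
    simp only [Matrix.map_apply, Matrix.updateRow_apply]
    split
    · rcases eq_or_ne v last with rfl | hv
      · simp
      · simp [Pi.single_apply, hv]
    · exact hZ0map u v
  have hmapb : PowerSeries.map φ b = PowerSeries.map g b := by
    rw [hb, RingHom.map_det, RingHom.map_det, RingHom.mapMatrix_apply, RingHom.mapMatrix_apply]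
    refine congrArg Matrix.det (Matrix.ext fun u v => ?_)
    simp only [Matrix.map_apply]
    exact hZ0map u v
  -- determinant becomes 1
  have hdet1 : PowerSeries.map φ ((genZ k n).det - 1) = 0 := by
    rw [map_sub, map_one, RingHom.map_det, RingHom.mapMatrix_apply]
    have hmat : ((genZ k n).map (PowerSeries.map φ)).det = 1 := by
      rw [← RingHom.mapMatrix_apply, ← RingHom.map_det, hdet, map_add, map_mul, hmapa, hmapb, hent last last,
        if_pos ⟨rfl, rfl⟩, ← hB, hw, ← hU, mul_assoc, Units.inv_mul, mul_one]
      ring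
    rw [hmat, sub_self]
  -- φ kills the ideal generators
  have hφp : φ p = 0 := by
    have hle : Ideal.span {q | ∃ m : ℕ,
        q = PowerSeries.coeff (R := MvPolynomial (Fin n × Fin n × ℕ) k) m ((genZ k n).det - 1)} ≤ RingHom.ker φ := by
      rw [Ideal.span_le]
      rintro q ⟨m, rfl⟩
      rw [SetLike.mem_coe, RingHom.mem_ker, ← PowerSeries.coeff_map, hdet1, map_zero]
    exact RingHom.mem_ker.mp (hle hp)
  -- φ agrees with g on the subalgebra
  have key : ∀ x : MvPolynomial (Fin n × Fin n × ℕ) k,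
      x ∈ Algebra.adjoin k {q : MvPolynomial (Fin n × Fin n × ℕ) k |
        ∃ (u v : Fin n) (m : ℕ), (u, v) ≠ (last, last) ∧ q = MvPolynomial.X (u, v, m)} →
      φ x = g x := by
    intro x hx
    induction hx using Algebra.adjoin_induction with
    | mem x hx =>
      obtain ⟨u, v, m, hne, rfl⟩ := hx
      rw [hφX (u, v, m), if_neg]
      rintro ⟨h1, h2⟩
      exact hne (Prod.ext h1 h2)
    | algebraMap r =>
      rw [MvPolynomial.algebraMap_eq, hφ, MvPolynomial.eval₂Hom_C, RingHom.comp_apply]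
    | add x y _ _ hx hy => rw [φ.map_add, g.map_add, hx, hy]
    | mul x y _ _ hx hy => rw [φ.map_mul, g.map_mul, hx, hy]
  have hφg : φ p = g p := key p hp'
  apply injg
  rw [map_zero, ← hφg, hφp]

end Paper
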